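/- Let φ : X → ℝ^d, D ⊆ X a set of data points, Φ a matrix whose rows form a basis of span{φ(x) : x ∈ D}, and Π the orthogonal projection onto the orthogonal complement of the row span of Φ. Then for every finite multiset X' of points from D, λ' > 0, and every x* ∈ X, the regularized posterior variance satisfies σ²_{X'}(x*) ≥ ‖Π φ(x*)‖₂². In particular, if φ(x*) is orthogonal to span{φ(x) : x ∈ D}, then σ²_{X'}(x*) = ‖φ(x*)‖₂² for every X': no data from D can reduce the uncertainty about x*. -/

import Mathlib

open Matrix

/-- Regularized posterior (conditional) kernel of the linear kernel
`k(a,b) = ⟪φ a, φ b⟫` after conditioning on the points `xs` with regularization `lam`: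
`k_X(a,b) = k(a,b) − k_X(a)ᵀ (K_X + λ I)⁻¹ k_X(b)`.
For `n = 0` this is the prior kernel; the diagonal `postK φ lam xs x x` is `σ²_X(x)`. -/
noncomputable def postK {α E : Type*} [NormedAddCommGroup E] [InnerProductSpace ℝ E]
    {n : ℕ} (φ : α → E) (lam : ℝ) (xs : Fin n → α) (a b : α) : ℝ :=
  (inner ℝ (φ a) (φ b) : ℝ) -
    (fun i => (inner ℝ (φ (xs i)) (φ a) : ℝ)) ⬝ᵥ
      ((Matrix.of (fun i j => (inner ℝ (φ (xs i)) (φ (xs j)) : ℝ))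
          + lam • (1 : Matrix (Fin n) (Fin n) ℝ))⁻¹).mulVec
        (fun i => (inner ℝ (φ (xs i)) (φ b) : ℝ))

section Aux
variable {d n : ℕ}

lemma gram_posSemidef (w : Fin n → EuclideanSpace ℝ (Fin d)) :
    (Matrix.of (fun i j => (inner ℝ (w i) (w j) : ℝ))).PosSemidef := by
  refine Matrix.PosSemidef.of_dotProduct_mulVec_nonneg ?_ ?_
  · ext i j
    simp only [Matrix.conjTranspose_apply, Matrix.of_apply, star_trivial]
    exact real_inner_comm _ _
  · intro x
    have : (star x) ⬝ᵥ (Matrix.of (fun i j => (inner ℝ (w i) (w j) : ℝ))).mulVec x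
        = inner ℝ (∑ i, x i • w i) (∑ j, x j • w j) := by
      simp only [dotProduct, mulVec, dotProduct, Matrix.of_apply, inner_sum, sum_inner,
        real_inner_smul_left, real_inner_smul_right, star_apply, star_trivial]
      rw [Finset.sum_congr rfl]
      intro i _
      rw [Finset.mul_sum]
      refine Finset.sum_congr rfl fun j _ => ?_
      rw [real_inner_comm (w j) (w i)]
      ring
    rw [this]
    exact real_inner_self_nonneg

lemma smul_one_posDef {lam : ℝ} (hlam : 0 < lam) :
    (lam • (1 : Matrix (Fin n) (Fin n) ℝ)).PosDef := by
  refine Matrix.PosDef.of_dotProduct_mulVec_pos ?_ ?_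
  · simp [Matrix.IsHermitian, Matrix.conjTranspose_smul]
  · intro x hx
    have : (star x) ⬝ᵥ (lam • (1 : Matrix (Fin n) (Fin n) ℝ)).mulVec x = lam * (x ⬝ᵥ x) := by
      simp [Matrix.smul_mulVec, dotProduct_smul]
    rw [this]
    obtain ⟨i, hi⟩ := Function.ne_iff.mp hx
    have hxx : 0 < x ⬝ᵥ x :=
      Finset.sum_pos' (fun j _ => mul_self_nonneg (x j))
        ⟨i, Finset.mem_univ i, mul_self_pos.mpr hi⟩
    positivity

lemma key_ineq (w : Fin n → EuclideanSpace ℝ (Fin d)) (v : EuclideanSpace ℝ (Fin d))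
    {lam : ℝ} (hlam : 0 < lam) :
    (fun i => (inner ℝ (w i) v : ℝ)) ⬝ᵥ
      ((Matrix.of (fun i j => (inner ℝ (w i) (w j) : ℝ))
          + lam • (1 : Matrix (Fin n) (Fin n) ℝ))⁻¹).mulVec
        (fun i => (inner ℝ (w i) v : ℝ)) ≤ ‖v‖ ^ 2 := by
  set K := Matrix.of (fun i j => (inner ℝ (w i) (w j) : ℝ)) with hKdef
  set M := K + lam • (1 : Matrix (Fin n) (Fin n) ℝ) with hMdef
  have hM : M.PosDef := Matrix.PosDef.posSemidef_add (gram_posSemidef w) (smul_one_posDef hlam)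
  set k : Fin n → ℝ := fun i => (inner ℝ (w i) v : ℝ) with hkdef
  set c : Fin n → ℝ := (M⁻¹).mulVec k with hcdef
  have hMc : M.mulVec c = k := by
    rw [hcdef, Matrix.mulVec_mulVec, Matrix.mul_nonsing_inv _ (isUnit_iff_isUnit_det _ |>.mp hM.isUnit), Matrix.one_mulVec]
  set u : EuclideanSpace ℝ (Fin d) := ∑ i, c i • w i with hudef
  have hck : c ⬝ᵥ k = (inner ℝ u v : ℝ) := by
    simp only [dotProduct, hkdef, hudef, sum_inner, real_inner_smul_left]
  have hcKc : c ⬝ᵥ K.mulVec c = (inner ℝ u u : ℝ) := by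
    simp only [dotProduct, mulVec, dotProduct, hKdef, Matrix.of_apply, hudef, inner_sum, sum_inner,
      real_inner_smul_left, real_inner_smul_right]
    rw [Finset.sum_congr rfl]
    intro i _
    rw [Finset.mul_sum]
    refine Finset.sum_congr rfl fun j _ => ?_
    rw [real_inner_comm (w j) (w i)]
    ring
  have hsplit : c ⬝ᵥ k = (inner ℝ u u : ℝ) + lam * (c ⬝ᵥ c) := by
    rw [← hMc, hMdef, Matrix.add_mulVec, dotProduct_add, hcKc, Matrix.smul_mulVec,
      dotProduct_smul]
    simp [smul_eq_mul]
  have hcc : 0 ≤ c ⬝ᵥ c := by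
    simp only [dotProduct]
    exact Finset.sum_nonneg fun i _ => mul_self_nonneg _
  have huu : (inner ℝ u u : ℝ) = ‖u‖ ^ 2 := real_inner_self_eq_norm_sq u
  have hcauchy : (inner ℝ u v : ℝ) ≤ ‖u‖ * ‖v‖ := real_inner_le_norm u v
  have ht : ‖u‖ ^ 2 ≤ (inner ℝ u v : ℝ) := by
    rw [← huu]
    nlinarith [hsplit, hck, mul_nonneg hlam.le hcc]
  have hfinal : k ⬝ᵥ c ≤ ‖v‖ ^ 2 := by
    rw [dotProduct_comm, hck]
    nlinarith [norm_nonneg u, norm_nonneg v, sq_nonneg (‖u‖ - ‖v‖)]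
  exact hfinal

end Aux

/-- Irreducible uncertainty: for any points selected from the data space `D`, the
regularized posterior variance about `x*` is at least the squared norm of the projection
of `φ(x*)` onto the orthogonal complement of `span {φ x : x ∈ D}`. In particular, if
`φ(x*)` is orthogonal to the span, no data from `D` reduces the uncertainty about `x*`. -/
theorem irreducible_uncertainty {α : Type*} {d : ℕ}
    (φ : α → EuclideanSpace ℝ (Fin d)) (D : Set α) (xstar : α) :
    (∀ (n : ℕ) (xs : Fin n → α), (∀ i, xs i ∈ D) → ∀ lam : ℝ, 0 < lam →
      ‖(Submodule.orthogonalProjection (Submodule.span ℝ (φ '' D))ᗮ (φ xstar)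
          : EuclideanSpace ℝ (Fin d))‖ ^ 2 ≤ postK φ lam xs xstar xstar)
    ∧ (φ xstar ∈ (Submodule.span ℝ (φ '' D))ᗮ →
        ∀ (n : ℕ) (xs : Fin n → α), (∀ i, xs i ∈ D) → ∀ lam : ℝ, 0 < lam →
          postK φ lam xs xstar xstar = ‖φ xstar‖ ^ 2) := by
  set S := Submodule.span ℝ (φ '' D) with hS
  constructor
  · intro n xs hxs lam hlam
    set p : EuclideanSpace ℝ (Fin d) := (Submodule.orthogonalProjection S (φ xstar) : EuclideanSpace ℝ (Fin d)) with hp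
    set q : EuclideanSpace ℝ (Fin d) := (Submodule.orthogonalProjection Sᗮ (φ xstar) : EuclideanSpace ℝ (Fin d)) with hq
    have hmem : ∀ i, φ (xs i) ∈ S := fun i =>
      Submodule.subset_span ⟨xs i, hxs i, rfl⟩
    have hpq : p + q = φ xstar := Submodule.starProjection_add_starProjection_orthogonal (K := S) (φ xstar)
    have hkp : ∀ i, (inner ℝ (φ (xs i)) (φ xstar) : ℝ) = (inner ℝ (φ (xs i)) p : ℝ) := by
      intro i
      rw [← hpq, inner_add_right]
      have : (inner ℝ (φ (xs i)) q : ℝ) = 0 :=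
        (Submodule.mem_orthogonal S q).mp (Submodule.orthogonalProjection Sᗮ (φ xstar)).2 _ (hmem i)
      rw [this, add_zero]
    have hpyth : ‖φ xstar‖ ^ 2 = ‖p‖ ^ 2 + ‖q‖ ^ 2 :=
      Submodule.norm_sq_eq_add_norm_sq_projection (φ xstar) S
    have hkey := key_ineq (fun i => φ (xs i)) p hlam
    unfold postK
    have hself : (inner ℝ (φ xstar) (φ xstar) : ℝ) = ‖φ xstar‖ ^ 2 :=
      real_inner_self_eq_norm_sq _
    simp only [hself, hkp]
    rw [hpyth]
    linarith [hkey]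
  · intro horth n xs hxs lam hlam
    have hk : (fun i => (inner ℝ (φ (xs i)) (φ xstar) : ℝ)) = 0 := by
      funext i
      have hmem : φ (xs i) ∈ S := Submodule.subset_span ⟨xs i, hxs i, rfl⟩
      exact (Submodule.mem_orthogonal S (φ xstar)).mp horth _ hmem
    unfold postK
    rw [hk]
    rw [show ((0 : Fin n → ℝ) ⬝ᵥ _) = 0 from zero_dotProduct _, sub_zero]
    exact real_inner_self_eq_norm_sq _
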